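/- Let D be a finite digraph, r, v ∈ V(D) with r having no in-edges, and let P be a maximum-size family of pairwise edge-disjoint r→v paths in D. Then deleting all in-edges of v not used by paths of P does not decrease λ_D(r,u) for any u ∈ V(D)−r. -/

import Mathlib

attribute [local instance] Classical.propDecidable

/-- A finite digraph: edges `E` with tail and head maps (parallel edges allowed). -/
structure Digraph' (V E : Type) where
  tail : E → V
  head : E → V

namespace Digraph'

variable {V E : Type} [Fintype V] [Fintype E]

/-- `es` is a directed walk from `r` to `v`. -/
def IsWalk (D : Digraph' V E) : V → V → List E → Prop
  | r, v, [] => r = v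
  | r, v, e :: es => D.tail e = r ∧ D.IsWalk (D.head e) v es

/-- `es` is a directed path from `r` to `v` using only edges of `F`. -/
def IsPathIn (D : Digraph' V E) (F : Set E) (r v : V) (es : List E) : Prop :=
  D.IsWalk r v es ∧ (∀ e ∈ es, e ∈ F) ∧ (r :: es.map D.head).Nodup

/-- The members of a list of paths are pairwise edge-disjoint. -/
def EdgeDisjoint (P : List (List E)) : Prop :=
  P.Pairwise (fun p q => ∀ e, e ∈ p → e ∉ q)

/-- The maximum number of pairwise edge-disjoint `r → v` paths inside `F`. -/
noncomputable def lam (D : Digraph' V E) (F : Set E) (r v : V) : ℕ :=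
  sSup {k | ∃ P : List (List E), P.length = k ∧ (∀ p ∈ P, D.IsPathIn F r v p) ∧
    EdgeDisjoint P}

/-- The set of edges of `F` whose head is `v`. -/
def inEdges (D : Digraph' V E) (F : Set E) (v : V) : Set E := {e ∈ F | D.head e = v}

/-- The in-degree of `v` in the subgraph `F`. -/
noncomputable def indeg (D : Digraph' V E) (F : Set E) (v : V) : ℕ :=
  (D.inEdges F v).ncard

/-- `I` arises as the set of last edges of a system of pairwise edge-disjoint
`r → v` paths in `F` (membership in the gammoid `G_F(v)`). -/
def InGammoid (D : Digraph' V E) (F : Set E) (r v : V) (I : Set E) : Prop :=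
  ∃ P : List (List E), (∀ p ∈ P, D.IsPathIn F r v p) ∧ EdgeDisjoint P ∧
    I = {e | ∃ p ∈ P, p.getLast? = some e}

/-- `F` is an `r`-flame: the in-degree of each `v ≠ r` equals λ_F(r,v). -/
def IsFlame (D : Digraph' V E) (r : V) (F : Set E) : Prop :=
  ∀ v, v ≠ r → D.indeg F v = D.lam F r v

/-- Total of `x` on the in-edges of `v`. -/
noncomputable def inflow (D : Digraph' V E) (x : E → ℝ) (v : V) : ℝ :=
  ∑ e, if D.head e = v then x e else 0

/-- Total of `x` on the out-edges of `v`. -/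
noncomputable def outflow (D : Digraph' V E) (x : E → ℝ) (v : V) : ℝ :=
  ∑ e, if D.tail e = v then x e else 0

/-- Total of `x` on the edges entering the vertex set `W`. -/
noncomputable def rhoSet (D : Digraph' V E) (x : E → ℝ) (W : Set V) : ℝ :=
  ∑ e, if D.head e ∈ W ∧ D.tail e ∉ W then x e else 0

/-- `x` is a (nonnegative) `r → v` flow. -/
def IsFlow (D : Digraph' V E) (r v : V) (x : E → ℝ) : Prop :=
  (∀ e, 0 ≤ x e) ∧ (∀ u, u ≠ r → u ≠ v → D.inflow x u = D.outflow x u) ∧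
    D.inflow x r = 0 ∧ D.outflow x v = 0

/-- The flow-connectivity from `r` to `v` under capacity `c`. -/
noncomputable def lamF (D : Digraph' V E) (r v : V) (c : E → ℝ) : ℝ :=
  sSup {a | ∃ x, D.IsFlow r v x ∧ x ≤ c ∧ D.outflow x r = a}

/-- Characteristic vector of an edge. -/
noncomputable def chi (e : E) : E → ℝ := fun e' => if e' = e then 1 else 0

/-- Restriction of `x` to the in-edges of `v` (zero elsewhere). -/
noncomputable def restrictIn (D : Digraph' V E) (v : V) (x : E → ℝ) : E → ℝ :=
  fun e => if D.head e = v then x e else 0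

/-- The polygammoid `G_c(v)`: restrictions to the in-edges of `v`
of `r → v` flows bounded by `c`. -/
def polygammoid (D : Digraph' V E) (r v : V) (c : E → ℝ) : Set (E → ℝ) :=
  {s | ∃ x, D.IsFlow r v x ∧ x ≤ c ∧ D.restrictIn v x = s}

/-- `D` has no parallel edges. -/
def NoParallel (D : Digraph' V E) : Prop :=
  ∀ e e', D.tail e = D.tail e' → D.head e = D.head e' → e = e'

/-- `es` is a directed cycle. -/
def IsCycle (D : Digraph' V E) (es : List E) : Prop :=
  es ≠ [] ∧ ∃ u, D.IsWalk u u es ∧ (es.map D.head).Nodup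

/-- Characteristic vector of a list of edges. -/
noncomputable def charVec (es : List E) : E → ℝ :=
  fun e => ((es.filter (fun e' => e' = e)).length : ℝ)

end Digraph'

namespace Digraph'
set_option linter.unusedSectionVars false
set_option maxHeartbeats 1000000

variable {V E : Type} [Fintype V] [Fintype E] (D : Digraph' V E)

theorem walk_append {a b c : V} {xs ys : List E} (h1 : D.IsWalk a b xs)
    (h2 : D.IsWalk b c ys) : D.IsWalk a c (xs ++ ys) := by
  induction xs generalizing a with
  | nil => cases h1; simpa using h2
  | cons e es ih => exact ⟨h1.1, ih h1.2⟩

theorem walk_split {a c : V} {xs ys : List E} (h : D.IsWalk a c (xs ++ ys)) :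
    ∃ b, D.IsWalk a b xs ∧ D.IsWalk b c ys := by
  induction xs generalizing a with
  | nil => exact ⟨a, rfl, h⟩
  | cons e es ih =>
    obtain ⟨b, hb1, hb2⟩ := ih h.2
    exact ⟨b, ⟨h.1, hb1⟩, hb2⟩

theorem walk_cross {W : Set V} {a b : V} {es : List E} (h : D.IsWalk a b es)
    (ha : a ∈ W) (hb : b ∉ W) : ∃ e ∈ es, D.tail e ∈ W ∧ D.head e ∉ W := by
  induction es generalizing a with
  | nil => cases h; exact absurd ha hb
  | cons e es ih =>
    by_cases hc : D.head e ∈ W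
    · obtain ⟨e', he', h1, h2⟩ := ih h.2 hc
      exact ⟨e', List.mem_cons_of_mem _ he', h1, h2⟩
    · exact ⟨e, List.mem_cons_self, h.1 ▸ ha, hc⟩

theorem walk_cross' {W : Set V} {a b : V} {es : List E} (h : D.IsWalk a b es)
    (ha : a ∉ W) (hb : b ∈ W) : ∃ e ∈ es, D.tail e ∉ W ∧ D.head e ∈ W := by
  induction es generalizing a with
  | nil => cases h; exact absurd hb ha
  | cons e es ih =>
    by_cases hc : D.head e ∈ W
    · exact ⟨e, List.mem_cons_self, h.1 ▸ ha, hc⟩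
    · obtain ⟨e', he', h1, h2⟩ := ih h.2 hc
      exact ⟨e', List.mem_cons_of_mem _ he', h1, h2⟩

theorem walk_prune_aux {b : V} : ∀ (n : ℕ) (es : List E), es.length ≤ n → ∀ a, D.IsWalk a b es →
    ∃ es', D.IsWalk a b es' ∧ (∀ e ∈ es', e ∈ es) ∧ (a :: es'.map D.head).Nodup := by
  intro n
  induction n with
  | zero =>
    intro es hlen a h
    have : es = [] := List.eq_nil_of_length_eq_zero (Nat.le_zero.mp hlen)
    subst this
    exact ⟨[], h, by simp, by simp⟩
  | succ n ih =>
    intro es hlen a h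
    match es with
    | [] => exact ⟨[], h, by simp, by simp⟩
    | e :: es₀ =>
      obtain ⟨hte, hw⟩ := h
      obtain ⟨es', hw', hsub', hnd'⟩ := ih es₀ (by simpa using hlen) (D.head e) hw
      by_cases ha : a ∈ (D.head e :: es'.map D.head)
      · rcases List.mem_cons.mp ha with ha | ha
        · exact ⟨es', ha ▸ hw', fun x hx => List.mem_cons_of_mem _ (hsub' x hx),
            ha ▸ hnd'⟩
        · obtain ⟨e', he', hhe'⟩ := List.mem_map.mp ha
          obtain ⟨l₁, l₂, rfl⟩ := List.append_of_mem he'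
          obtain ⟨m, hm1, hm2⟩ := D.walk_split (xs := l₁ ++ [e']) (ys := l₂)
            (by simpa using hw')
          obtain ⟨m₁, _, hm₁2⟩ := D.walk_split (xs := l₁) (ys := [e']) hm1
          have hm : m = a := by
            obtain ⟨_, h2⟩ := hm₁2
            rw [show D.IsWalk (D.head e') m [] = (D.head e' = m) from rfl] at h2
            rw [← h2, hhe']
          subst hm
          have hndes' : (l₁ ++ e' :: l₂).Nodup := ((List.nodup_cons.mp hnd').2).of_map _
          have hlen2 : l₂.length ≤ n := by
            have h1 : l₂.length < (l₁ ++ e' :: l₂).length := by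
              simp only [List.length_append, List.length_cons]; omega
            have h2 : (l₁ ++ e' :: l₂).length ≤ es₀.length :=
              (List.subperm_of_subset hndes' hsub').length_le
            have h3 : es₀.length ≤ n := by simpa using hlen
            omega
          obtain ⟨es'', h1, h2, h3⟩ := ih l₂ hlen2 m hm2
          exact ⟨es'', h1, fun x hx => List.mem_cons_of_mem _
            (hsub' x (by simp only [List.mem_append, List.mem_cons]; right; right; exact h2 x hx)), h3⟩
      · refine ⟨e :: es', ⟨hte, hw'⟩, ?_, ?_⟩
        · intro x hx
          rcases List.mem_cons.mp hx with rfl | hx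
          · exact List.mem_cons_self
          · exact List.mem_cons_of_mem _ (hsub' x hx)
        · exact List.nodup_cons.mpr ⟨by simpa using ha, by simpa using hnd'⟩

theorem walk_prune {a b : V} {es : List E} (h : D.IsWalk a b es) :
    ∃ es', D.IsWalk a b es' ∧ (∀ e ∈ es', e ∈ es) ∧ (a :: es'.map D.head).Nodup :=
  D.walk_prune_aux es.length es le_rfl a h

end Digraph'

namespace Digraph'
set_option linter.unusedSectionVars false
set_option maxHeartbeats 1000000

variable {V E : Type} [Fintype V] [Fintype E] (D : Digraph' V E)

/-- The set of edges of `F` crossing out of `W`. -/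
def crossSet (F : Set E) (W : Set V) : Set E :=
  {e | e ∈ F ∧ D.tail e ∈ W ∧ D.head e ∉ W}

noncomputable def cutCard (F : Set E) (W : Set V) : ℕ := (D.crossSet F W).ncard

theorem crossSet_diff (F : Set E) (W : Set V) (e : E) :
    D.crossSet (F \ {e}) W = D.crossSet F W \ {e} := by
  ext x; simp only [crossSet, Set.mem_diff, Set.mem_setOf_eq, Set.mem_singleton_iff]; tauto

theorem cutCard_diff {F : Set E} {W : Set V} {e : E} (he : e ∈ D.crossSet F W) :
    D.cutCard (F \ {e}) W + 1 = D.cutCard F W := by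
  rw [cutCard, cutCard, crossSet_diff]
  exact Set.ncard_diff_singleton_add_one he (Set.toFinite _)

theorem paths_sub_diff {P : List (List E)} {F : Set E} {a b : V} {p : List E} {e : E}
    (hP : ∀ q ∈ P, D.IsPathIn F a b q) (hd : EdgeDisjoint (p :: P)) (he : e ∈ p) :
    ∀ q ∈ P, D.IsPathIn (F \ {e}) a b q := by
  intro q hq
  obtain ⟨h1, h2, h3⟩ := hP q hq
  refine ⟨h1, fun x hx => ⟨h2 x hx, ?_⟩, h3⟩
  have : ∀ y ∈ p, y ∉ q := (List.pairwise_cons.mp hd).1 q hq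
  intro hxe
  exact this e he (hxe ▸ hx)

/-- Easy direction of Menger: counting. -/
theorem length_le_cutCard : ∀ (P : List (List E)) (F : Set E) (W : Set V) (a b : V),
    (∀ p ∈ P, D.IsPathIn F a b p) → EdgeDisjoint P → a ∈ W → b ∉ W →
    P.length ≤ D.cutCard F W := by
  intro P
  induction P with
  | nil => intro _ _ _ _ _ _ _ _; simp
  | cons p P ih =>
    intro F W a b hP hd ha hb
    obtain ⟨e, he, het, heh⟩ := D.walk_cross (hP p (List.mem_cons_self)).1 ha hb
    have heF : e ∈ F := (hP p (List.mem_cons_self)).2.1 e he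
    have hcross : e ∈ D.crossSet F W := ⟨heF, het, heh⟩
    have := ih (F \ {e}) W a b
      (D.paths_sub_diff (fun q hq => hP q (List.mem_cons_of_mem _ hq)) hd he)
      (List.Pairwise.of_cons hd) ha hb
    have h2 := D.cutCard_diff hcross
    simp only [List.length_cons]
    omega

/-- If the cut is tight, every crossing edge is used by the path system. -/
theorem crossing_mem_paths : ∀ (P : List (List E)) (F : Set E) (W : Set V) (a b : V),
    (∀ p ∈ P, D.IsPathIn F a b p) → EdgeDisjoint P → a ∈ W → b ∉ W →
    D.cutCard F W ≤ P.length →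
    ∀ e, e ∈ D.crossSet F W → ∃ p ∈ P, e ∈ p := by
  intro P
  induction P with
  | nil =>
    intro F W a b _ _ _ _ hle e he
    have : 1 ≤ D.cutCard F W := by
      rw [cutCard]
      exact (Set.ncard_pos (Set.toFinite _)).mpr ⟨e, he⟩
    simp at hle; omega
  | cons p P ih =>
    intro F W a b hP hd ha hb hle e he
    obtain ⟨e₀, he₀, het, heh⟩ := D.walk_cross (hP p (List.mem_cons_self)).1 ha hb
    have he₀F : e₀ ∈ F := (hP p (List.mem_cons_self)).2.1 e₀ he₀
    have hcross : e₀ ∈ D.crossSet F W := ⟨he₀F, het, heh⟩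
    by_cases hee : e = e₀
    · exact ⟨p, List.mem_cons_self, hee ▸ he₀⟩
    · have h2 := D.cutCard_diff hcross
      have hrec := ih (F \ {e₀}) W a b
        (D.paths_sub_diff (fun q hq => hP q (List.mem_cons_of_mem _ hq)) hd he₀)
        (List.Pairwise.of_cons hd) ha hb (by simp at hle; omega)
        e (by rw [crossSet_diff]; exact ⟨he, hee⟩)
      obtain ⟨q, hq, heq⟩ := hrec
      exact ⟨q, List.mem_cons_of_mem _ hq, heq⟩

/-- The set of achievable family sizes. -/
def famSet (F : Set E) (a b : V) : Set ℕ :=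
  {k | ∃ P : List (List E), P.length = k ∧ (∀ p ∈ P, D.IsPathIn F a b p) ∧ EdgeDisjoint P}

theorem lam_eq_sSup (F : Set E) (a b : V) : D.lam F a b = sSup (D.famSet F a b) := rfl

theorem zero_mem_famSet (F : Set E) (a b : V) : 0 ∈ D.famSet F a b :=
  ⟨[], rfl, by simp, List.Pairwise.nil⟩

theorem path_ne_nil {F : Set E} {a b : V} {p : List E} (h : D.IsPathIn F a b p)
    (hab : a ≠ b) : p ≠ [] := by
  intro hp; subst hp; exact hab h.1

theorem length_le_ncard : ∀ (P : List (List E)) (F : Set E) (a b : V), a ≠ b →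
    (∀ p ∈ P, D.IsPathIn F a b p) → EdgeDisjoint P → P.length ≤ F.ncard := by
  intro P
  induction P with
  | nil => simp
  | cons p P ih =>
    intro F a b hab hP hd
    have hpne : p ≠ [] := D.path_ne_nil (hP p (List.mem_cons_self)) hab
    obtain ⟨e, he⟩ := List.exists_mem_of_ne_nil p hpne
    have heF : e ∈ F := (hP p (List.mem_cons_self)).2.1 e he
    have := ih (F \ {e}) a b hab
      (D.paths_sub_diff (fun q hq => hP q (List.mem_cons_of_mem _ hq)) hd he)
      (List.Pairwise.of_cons hd)
    have h2 : (F \ {e}).ncard + 1 = F.ncard :=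
      Set.ncard_diff_singleton_add_one heF (Set.toFinite _)
    simp only [List.length_cons]
    omega

theorem bddAbove_famSet (F : Set E) (a b : V) (hab : a ≠ b) :
    BddAbove (D.famSet F a b) := by
  refine ⟨F.ncard, fun k hk => ?_⟩
  obtain ⟨P, rfl, hP, hd⟩ := hk
  exact D.length_le_ncard P F a b hab hP hd

theorem lam_mem_famSet (F : Set E) (a b : V) (hab : a ≠ b) :
    D.lam F a b ∈ D.famSet F a b :=
  Nat.sSup_mem ⟨0, D.zero_mem_famSet F a b⟩ (D.bddAbove_famSet F a b hab)

theorem famSet_downward {F : Set E} {a b : V} {m : ℕ} (hm : m ∈ D.famSet F a b)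
    {m' : ℕ} (h : m' ≤ m) : m' ∈ D.famSet F a b := by
  obtain ⟨P, rfl, hP, hd⟩ := hm
  exact ⟨P.take m', by simp [h], fun p hp => hP p ((List.take_sublist _ _).mem hp),
    hd.sublist (List.take_sublist _ _)⟩

theorem le_lam {F : Set E} {a b : V} {m : ℕ} (hab : a ≠ b) (hm : m ∈ D.famSet F a b) :
    m ≤ D.lam F a b :=
  le_csSup (D.bddAbove_famSet F a b hab) hm

end Digraph'

namespace Digraph'
set_option linter.unusedSectionVars false
set_option maxHeartbeats 1000000

variable {V E : Type} [Fintype V] [Fintype E] (D : Digraph' V E)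

noncomputable def outd (S : Finset E) (w : V) : ℕ := (S.filter fun e => D.tail e = w).card
noncomputable def ind (S : Finset E) (w : V) : ℕ := (S.filter fun e => D.head e = w).card
noncomputable def excess (S : Finset E) (w : V) : ℤ := (D.ind S w : ℤ) - (D.outd S w : ℤ)

theorem excess_insert {S : Finset E} {e : E} (he : e ∉ S) (w : V) :
    D.excess (insert e S) w =
      D.excess S w + (if D.head e = w then 1 else 0) - (if D.tail e = w then 1 else 0) := by
  have hind : D.ind (insert e S) w = D.ind S w + (if D.head e = w then 1 else 0) := by
    rw [ind, ind, Finset.filter_insert]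
    split_ifs
    · rw [Finset.card_insert_of_notMem (fun hc => he (Finset.mem_filter.mp hc).1)]
    · rfl
  have houtd : D.outd (insert e S) w = D.outd S w + (if D.tail e = w then 1 else 0) := by
    rw [outd, outd, Finset.filter_insert]
    split_ifs
    · rw [Finset.card_insert_of_notMem (fun hc => he (Finset.mem_filter.mp hc).1)]
    · rfl
  rw [excess, excess, hind, houtd]
  push_cast
  ring

theorem excess_erase {S : Finset E} {e : E} (he : e ∈ S) (w : V) :
    D.excess (S.erase e) w =
      D.excess S w - (if D.head e = w then 1 else 0) + (if D.tail e = w then 1 else 0) := by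
  have h1 : insert e (S.erase e) = S := Finset.insert_erase he
  have h2 := D.excess_insert (S := S.erase e) (e := e) (Finset.notMem_erase e S) w
  rw [h1] at h2
  omega

theorem excess_union {A B : Finset E} (h : Disjoint A B) (w : V) :
    D.excess (A ∪ B) w = D.excess A w + D.excess B w := by
  have hind : D.ind (A ∪ B) w = D.ind A w + D.ind B w := by
    rw [ind, ind, ind, Finset.filter_union,
      Finset.card_union_of_disjoint (Finset.disjoint_filter_filter h)]
  have houtd : D.outd (A ∪ B) w = D.outd A w + D.outd B w := by
    rw [outd, outd, outd, Finset.filter_union,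
      Finset.card_union_of_disjoint (Finset.disjoint_filter_filter h)]
  rw [excess, excess, excess, hind, houtd]
  push_cast
  ring

theorem excess_sdiff {S P : Finset E} (h : P ⊆ S) (w : V) :
    D.excess (S \ P) w = D.excess S w - D.excess P w := by
  have h1 : Disjoint (S \ P) P := Finset.sdiff_disjoint
  have h2 : (S \ P) ∪ P = S := Finset.sdiff_union_of_subset h
  have := D.excess_union h1 w
  rw [h2] at this
  omega

theorem excess_path {b : V} : ∀ {p : List E} {a : V}, D.IsWalk a b p →
    (a :: p.map D.head).Nodup → ∀ w,
    D.excess p.toFinset w = (if w = b then 1 else 0) - (if w = a then 1 else 0) := by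
  intro p
  induction p with
  | nil =>
    intro a hw hnd w
    have : a = b := hw
    subst this
    simp [excess, ind, outd]
  | cons e p ih =>
    intro a hw hnd w
    obtain ⟨hte, hwp⟩ := hw
    have hnd' : (D.head e :: p.map D.head).Nodup := by
      simpa using (List.nodup_cons.mp hnd).2
    have hep : e ∉ p := fun hc =>
      (List.nodup_cons.mp hnd').1 (List.mem_map_of_mem hc)
    have htf : (e :: p).toFinset = insert e p.toFinset := by
      simp [List.toFinset_cons]
    rw [htf, D.excess_insert (by simpa using hep) w, ih hwp hnd' w, hte]
    simp only [eq_comm]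
    split_ifs <;> omega

noncomputable def flowOf (Q : List (List E)) : Finset E :=
  Q.foldr (fun p acc => p.toFinset ∪ acc) ∅

theorem mem_flowOf {Q : List (List E)} {e : E} :
    e ∈ flowOf (E := E) Q ↔ ∃ q ∈ Q, e ∈ q := by
  induction Q with
  | nil => simp [flowOf]
  | cons q Q ih =>
    rw [show flowOf (q :: Q) = q.toFinset ∪ flowOf Q from rfl, Finset.mem_union,
      List.mem_toFinset, ih]
    constructor
    · rintro (h | ⟨q', hq', h⟩)
      exacts [⟨q, List.mem_cons_self, h⟩, ⟨q', List.mem_cons_of_mem _ hq', h⟩]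
    · rintro ⟨q', hq', h⟩
      rcases List.mem_cons.mp hq' with rfl | hq'
      exacts [Or.inl h, Or.inr ⟨q', hq', h⟩]

theorem excess_flowOf {F : Set E} {a b : V} : ∀ {Q : List (List E)},
    (∀ q ∈ Q, D.IsPathIn F a b q) → EdgeDisjoint Q → ∀ w,
    D.excess (flowOf Q) w =
      (Q.length : ℤ) * ((if w = b then 1 else 0) - (if w = a then 1 else 0)) := by
  intro Q
  induction Q with
  | nil => intro _ _ w; simp [flowOf, excess, ind, outd]
  | cons q Q ih =>
    intro hQ hd w
    have hdisj : Disjoint q.toFinset (flowOf Q) := by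
      rw [Finset.disjoint_left]
      intro e he hc
      obtain ⟨q', hq', heq'⟩ := mem_flowOf.mp hc
      exact (List.pairwise_cons.mp hd).1 q' hq' e (by simpa using he) heq'
    have hfl : flowOf (q :: Q) = q.toFinset ∪ flowOf Q := rfl
    rw [hfl, D.excess_union hdisj w,
      D.excess_path (hQ q (List.mem_cons_self)).1 (hQ q (List.mem_cons_self)).2.2 w,
      ih (fun p hp => hQ p (List.mem_cons_of_mem _ hp)) (List.Pairwise.of_cons hd) w]
    simp only [List.length_cons]
    push_cast
    ring

end Digraph'

namespace Digraph'
set_option linter.unusedSectionVars false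
set_option maxHeartbeats 1000000

variable {V E : Type} [Fintype V] [Fintype E]

/-- Residual chains: forward unused edges of `F`, backward edges of `S`. -/
inductive RChain (D : Digraph' V E) (F : Set E) (S : Finset E) : V → V → List E → Prop
  | nil (a : V) : RChain D F S a a []
  | fwd {e : E} {c : V} {es : List E} : e ∈ F → e ∉ S → RChain D F S (D.head e) c es →
      RChain D F S (D.tail e) c (e :: es)
  | bwd {e : E} {c : V} {es : List E} : e ∈ S → RChain D F S (D.tail e) c es →
      RChain D F S (D.head e) c (e :: es)

variable (D : Digraph' V E)

theorem rchain_split {F : Set E} {S : Finset E} {c : V} :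
    ∀ {xs ys : List E} {a : V}, RChain D F S a c (xs ++ ys) →
    ∃ b, RChain D F S a b xs ∧ RChain D F S b c ys := by
  intro xs
  induction xs with
  | nil => intro ys a h; exact ⟨a, RChain.nil a, h⟩
  | cons e xs ih =>
    intro ys a h
    cases h with
    | fwd hF hS hch =>
      obtain ⟨b, hb1, hb2⟩ := ih hch
      exact ⟨b, RChain.fwd hF hS hb1, hb2⟩
    | bwd hS hch =>
      obtain ⟨b, hb1, hb2⟩ := ih hch
      exact ⟨b, RChain.bwd hS hb1, hb2⟩

theorem rchain_insert {F : Set E} {S : Finset E} {c : V} {e : E} :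
    ∀ {a : V} {es : List E}, RChain D F S a c es → e ∉ es →
    RChain D F (insert e S) a c es := by
  intro a es h
  induction h with
  | nil => intro _; exact RChain.nil _
  | fwd hF hS hch ih =>
    rename_i e' c' es'
    intro hne
    refine RChain.fwd hF ?_ (ih fun hc => hne (List.mem_cons_of_mem _ hc))
    simp only [Finset.mem_insert]
    push_neg
    exact ⟨fun hc => hne (hc ▸ List.mem_cons_self), hS⟩
  | bwd hS hch ih =>
    intro hne
    exact RChain.bwd (Finset.mem_insert_of_mem hS) (ih fun hc => hne (List.mem_cons_of_mem _ hc))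

theorem rchain_erase {F : Set E} {S : Finset E} {c : V} {e : E} :
    ∀ {a : V} {es : List E}, RChain D F S a c es → e ∉ es →
    RChain D F (S.erase e) a c es := by
  intro a es h
  induction h with
  | nil => intro _; exact RChain.nil _
  | fwd hF hS hch ih =>
    intro hne
    exact RChain.fwd hF (fun hc => hS (Finset.mem_of_mem_erase hc))
      (ih fun hc => hne (List.mem_cons_of_mem _ hc))
  | bwd hS hch ih =>
    rename_i e' c' es'
    intro hne
    refine RChain.bwd (Finset.mem_erase.mpr ⟨fun hc => hne (hc ▸ List.mem_cons_self), hS⟩)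
      (ih fun hc => hne (List.mem_cons_of_mem _ hc))

theorem rchain_dedup {F : Set E} {S : Finset E} {u : V} :
    ∀ (es : List E) (a : V), RChain D F S a u es →
    ∃ es', es'.Nodup ∧ (∀ x ∈ es', x ∈ es) ∧ RChain D F S a u es' := by
  intro es
  induction es with
  | nil => intro a h; exact ⟨[], by simp, by simp, h⟩
  | cons e es ih =>
    intro a h
    cases h with
    | fwd hF hS hch =>
      obtain ⟨es₂, hnd, hsub, hch₂⟩ := ih _ hch
      by_cases he : e ∈ es₂
      · obtain ⟨l₁, l₂, rfl⟩ := List.append_of_mem he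
        obtain ⟨b, _, hb2⟩ := D.rchain_split hch₂
        cases hb2 with
        | fwd hF' hS' hch' =>
          refine ⟨e :: l₂, ?_, ?_, RChain.fwd hF hS hch'⟩
          · exact hnd.sublist (List.sublist_append_right l₁ (e :: l₂))
          · intro x hx
            rcases List.mem_cons.mp hx with rfl | hx
            · exact List.mem_cons_self
            · exact List.mem_cons_of_mem _ (hsub x (by simp [hx]))
        | bwd hS' hch' => exact absurd hS' hS
      · refine ⟨e :: es₂, List.nodup_cons.mpr ⟨he, hnd⟩, ?_, RChain.fwd hF hS hch₂⟩
        intro x hx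
        rcases List.mem_cons.mp hx with rfl | hx
        · exact List.mem_cons_self
        · exact List.mem_cons_of_mem _ (hsub x hx)
    | bwd hS hch =>
      obtain ⟨es₂, hnd, hsub, hch₂⟩ := ih _ hch
      by_cases he : e ∈ es₂
      · obtain ⟨l₁, l₂, rfl⟩ := List.append_of_mem he
        obtain ⟨b, _, hb2⟩ := D.rchain_split hch₂
        cases hb2 with
        | bwd hS' hch' =>
          refine ⟨e :: l₂, ?_, ?_, RChain.bwd hS hch'⟩
          · exact hnd.sublist (List.sublist_append_right l₁ (e :: l₂))
          · intro x hx
            rcases List.mem_cons.mp hx with rfl | hx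
            · exact List.mem_cons_self
            · exact List.mem_cons_of_mem _ (hsub x (by simp [hx]))
        | fwd hF' hS' hch' => exact absurd hS hS'
      · refine ⟨e :: es₂, List.nodup_cons.mpr ⟨he, hnd⟩, ?_, RChain.bwd hS hch₂⟩
        intro x hx
        rcases List.mem_cons.mp hx with rfl | hx
        · exact List.mem_cons_self
        · exact List.mem_cons_of_mem _ (hsub x hx)

theorem augment {F : Set E} {u : V} : ∀ (es : List E), es.Nodup → ∀ (S : Finset E) (a : V),
    RChain D F S a u es → (∀ x ∈ S, x ∈ F) →
    ∃ S' : Finset E, (∀ x ∈ S', x ∈ F) ∧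
      ∀ w, D.excess S' w =
        D.excess S w + (if w = u then 1 else 0) - (if w = a then 1 else 0) := by
  intro es
  induction es with
  | nil =>
    intro _ S a h hSF
    cases h
    exact ⟨S, hSF, fun w => by simp⟩
  | cons e es ih =>
    intro hnd S a h hSF
    have hne : e ∉ es := (List.nodup_cons.mp hnd).1
    cases h with
    | fwd hF hS hch =>
      have hch₂ := D.rchain_insert hch hne
      have hSF₂ : ∀ x ∈ insert e S, x ∈ F := by
        intro x hx
        rcases Finset.mem_insert.mp hx with rfl | hx
        exacts [hF, hSF x hx]
      obtain ⟨S', hS'F, hexc⟩ := ih (List.nodup_cons.mp hnd).2 (insert e S) (D.head e) hch₂ hSF₂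
      refine ⟨S', hS'F, fun w => ?_⟩
      have h1 := hexc w
      have h2 := D.excess_insert hS w
      rw [h2] at h1
      rw [h1]
      simp only [eq_comm]
      split_ifs <;> omega
    | bwd hS hch =>
      have hch₂ := D.rchain_erase hch hne
      have hSF₂ : ∀ x ∈ S.erase e, x ∈ F := fun x hx => hSF x (Finset.mem_of_mem_erase hx)
      obtain ⟨S', hS'F, hexc⟩ := ih (List.nodup_cons.mp hnd).2 (S.erase e) (D.tail e) hch₂ hSF₂
      refine ⟨S', hS'F, fun w => ?_⟩
      have h1 := hexc w
      have h2 := D.excess_erase hS w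
      rw [h2] at h1
      rw [h1]
      simp only [eq_comm]
      split_ifs <;> omega

end Digraph'

namespace Digraph'
set_option linter.unusedSectionVars false
set_option maxHeartbeats 1000000

variable {V E : Type} [Fintype V] [Fintype E] (D : Digraph' V E)

theorem exists_inedge_of_excess {S : Finset E} {t : V} (h : 1 ≤ D.excess S t) :
    ∃ e ∈ S, D.head e = t := by
  have hind : 1 ≤ D.ind S t := by
    rw [excess] at h; omega
  rw [ind] at hind
  obtain ⟨e, he⟩ := Finset.card_pos.mp hind
  obtain ⟨h1, h2⟩ := Finset.mem_filter.mp he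
  exact ⟨e, h1, h2⟩

theorem exists_walk_of_excess : ∀ (n : ℕ) (S : Finset E), S.card ≤ n → ∀ (r t : V),
    (∀ w, w ≠ r → 0 ≤ D.excess S w) → 1 ≤ D.excess S t →
    ∃ es, D.IsWalk r t es ∧ es.Nodup ∧ ∀ e ∈ es, e ∈ S := by
  intro n
  induction n with
  | zero =>
    intro S hS r t h0 h1
    have : S = ∅ := Finset.card_eq_zero.mp (Nat.le_zero.mp hS)
    subst this
    rw [excess] at h1
    simp [ind, outd] at h1
  | succ n ih =>
    intro S hS r t h0 h1
    obtain ⟨e, heS, heh⟩ := D.exists_inedge_of_excess h1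
    by_cases ha : D.tail e = r
    · exact ⟨[e], ⟨ha, heh⟩, by simp, by simp [heS]⟩
    · have hcard : (S.erase e).card ≤ n := by
        have := Finset.card_erase_of_mem heS
        omega
      have herase := fun w => D.excess_erase heS w
      have h0' : ∀ w, w ≠ r → 0 ≤ D.excess (S.erase e) w := by
        intro w hw
        have h2 := herase w
        by_cases hhw : D.head e = w
        · have hwt : w = t := hhw ▸ heh
          have : 1 ≤ D.excess S w := hwt ▸ h1
          rw [h2, if_pos hhw]
          split_ifs <;> omega
        · have := h0 w hw
          rw [h2, if_neg hhw]
          split_ifs <;> omega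
      have h1' : 1 ≤ D.excess (S.erase e) (D.tail e) := by
        have h2 := herase (D.tail e)
        by_cases hhw : D.head e = D.tail e
        · have : 1 ≤ D.excess S (D.tail e) := by
            have hwt : D.tail e = t := by rw [← hhw, heh]
            exact hwt ▸ h1
          rw [h2, if_pos hhw, if_pos rfl]
          omega
        · have := h0 (D.tail e) ha
          rw [h2, if_neg hhw, if_pos rfl]
          omega
      obtain ⟨es, hwk, hnd, hsub⟩ := ih (S.erase e) hcard r (D.tail e) h0' h1'
      refine ⟨es ++ [e], D.walk_append hwk ⟨rfl, heh⟩, ?_, ?_⟩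
      · rw [List.nodup_append]
        refine ⟨hnd, by simp, ?_⟩
        intro x hx
        simp only [List.mem_singleton]
        intro b hb hxe
        subst hb
        exact (Finset.notMem_erase b S) (hxe ▸ hsub x hx)
      · intro x hx
        rcases List.mem_append.mp hx with hx | hx
        · exact Finset.mem_of_mem_erase (hsub x hx)
        · simp only [List.mem_singleton] at hx
          exact hx ▸ heS

theorem decomp {F : Set E} {r u : V} (hru : r ≠ u) : ∀ (n : ℕ) (S : Finset E),
    (∀ x ∈ S, x ∈ F) → (∀ w, w ≠ r → w ≠ u → D.excess S w = 0) →
    D.excess S u = (n : ℤ) →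
    ∃ Q : List (List E), Q.length = n ∧ (∀ p ∈ Q, D.IsPathIn F r u p) ∧ EdgeDisjoint Q ∧
      ∀ p ∈ Q, ∀ e ∈ p, e ∈ S := by
  intro n
  induction n with
  | zero => intro S _ _ _; exact ⟨[], rfl, by simp, List.Pairwise.nil, by simp⟩
  | succ n ih =>
    intro S hSF hint hu
    have h0 : ∀ w, w ≠ r → 0 ≤ D.excess S w := by
      intro w hw
      by_cases hwu : w = u
      · rw [hwu, hu]; positivity
      · rw [hint w hw hwu]
    have h1 : 1 ≤ D.excess S u := by rw [hu]; exact_mod_cast Nat.succ_le_succ (Nat.zero_le n)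
    obtain ⟨es, hwk, hnd, hsub⟩ := D.exists_walk_of_excess S.card S le_rfl r u h0 h1
    obtain ⟨p, hpw, hpsub, hpnd⟩ := D.walk_prune hwk
    have hpS : ∀ e ∈ p, e ∈ S := fun e he => hsub e (hpsub e he)
    have hpath : D.IsPathIn F r u p := ⟨hpw, fun e he => hSF e (hpS e he), hpnd⟩
    have hptf : p.toFinset ⊆ S := fun e he => hpS e (List.mem_toFinset.mp he)
    set S₂ := S \ p.toFinset with hS₂def
    have hexc : ∀ w, D.excess S₂ w =
        D.excess S w - ((if w = u then 1 else 0) - (if w = r then 1 else 0)) := by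
      intro w
      rw [hS₂def, D.excess_sdiff hptf w, D.excess_path hpw hpnd w]
    obtain ⟨Q', hlen, hQ'path, hQ'disj, hQ'S⟩ := ih S₂
      (fun x hx => hSF x (Finset.mem_sdiff.mp hx).1)
      (by
        intro w hw1 hw2
        rw [hexc w, hint w hw1 hw2, if_neg hw2, if_neg hw1]
        ring)
      (by
        rw [hexc u, hu, if_pos rfl, if_neg (fun hc : u = r => hru hc.symm)]
        push_cast
        ring)
    refine ⟨p :: Q', by simp [hlen], ?_, ?_, ?_⟩
    · intro q hq
      rcases List.mem_cons.mp hq with rfl | hq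
      exacts [hpath, hQ'path q hq]
    · rw [EdgeDisjoint, List.pairwise_cons]
      refine ⟨?_, hQ'disj⟩
      intro q hq e hep heq
      have heS₂ : e ∈ S₂ := hQ'S q hq e heq
      rw [hS₂def, Finset.mem_sdiff] at heS₂
      exact heS₂.2 (List.mem_toFinset.mpr hep)
    · intro q hq e he
      rcases List.mem_cons.mp hq with rfl | hq
      · exact hpS e he
      · exact (Finset.mem_sdiff.mp (hQ'S q hq e he)).1

end Digraph'

namespace Digraph'
set_option linter.unusedSectionVars false
set_option maxHeartbeats 1000000

variable {V E : Type} [Fintype V] [Fintype E] (D : Digraph' V E)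

theorem rchain_append {F : Set E} {S : Finset E} {a b c : V} {xs ys : List E}
    (h1 : RChain D F S a b xs) (h2 : RChain D F S b c ys) :
    RChain D F S a c (xs ++ ys) := by
  induction h1 with
  | nil => simpa using h2
  | fwd hF hS _ ih => exact RChain.fwd hF hS (ih h2)
  | bwd hS _ ih => exact RChain.bwd hS (ih h2)

/-- Hard direction of Menger's theorem. -/
theorem menger {F : Set E} {r u : V} (hur : u ≠ r) (m : ℕ)
    (hcut : ∀ W : Set V, r ∈ W → u ∉ W → m ≤ D.cutCard F W) :
    m ≤ D.lam F r u := by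
  by_contra hlt
  push_neg at hlt
  have hru : r ≠ u := hur.symm
  obtain ⟨Q, hQlen, hQpath, hQdisj⟩ := D.lam_mem_famSet F r u hru
  set n := D.lam F r u with hn
  set UQ := flowOf Q with hUQ
  have hUQF : ∀ x ∈ UQ, x ∈ F := by
    intro x hx
    obtain ⟨q, hq, hxq⟩ := mem_flowOf.mp hx
    exact (hQpath q hq).2.1 x hxq
  set step : V → V → Prop := fun a b =>
    (∃ e, e ∈ F ∧ e ∉ UQ ∧ D.tail e = a ∧ D.head e = b) ∨
    (∃ e, e ∈ UQ ∧ D.tail e = b ∧ D.head e = a) with hstep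
  set W : Set V := {x | Relation.ReflTransGen step r x} with hW
  have hrW : r ∈ W := Relation.ReflTransGen.refl
  -- from reachability to residual chains
  have hRT : ∀ x, x ∈ W → ∃ es, RChain D F UQ r x es := by
    intro x hx
    induction hx with
    | refl => exact ⟨[], RChain.nil r⟩
    | tail hab hstep ih =>
      obtain ⟨es, hes⟩ := ih
      rename_i b c _
      rcases hstep with ⟨e, heF, heS, het, heh⟩ | ⟨e, heS, het, heh⟩
      · refine ⟨es ++ [e], D.rchain_append hes ?_⟩
        rw [← het, ← heh]
        exact RChain.fwd heF heS (RChain.nil _)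
      · refine ⟨es ++ [e], D.rchain_append hes ?_⟩
        rw [← het, ← heh]
        exact RChain.bwd heS (RChain.nil _)
  -- u is not reachable
  have huW : u ∉ W := by
    intro hc
    obtain ⟨es₀, hch₀⟩ := hRT u hc
    obtain ⟨es, hnd, _, hch⟩ := D.rchain_dedup es₀ r hch₀
    obtain ⟨S', hS'F, hexc⟩ := D.augment es hnd UQ r hch hUQF
    have hflowexc := D.excess_flowOf (F := F) (a := r) (b := u) hQpath hQdisj
    have hexc' : ∀ w, D.excess S' w =
        (n : ℤ) * ((if w = u then 1 else 0) - (if w = r then 1 else 0)) +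
          (if w = u then 1 else 0) - (if w = r then 1 else 0) := by
      intro w
      rw [hexc w, hflowexc w, hQlen]
    obtain ⟨Q', hQ'len, hQ'path, hQ'disj, _⟩ := D.decomp hru (n + 1) S' hS'F
      (by
        intro w hw1 hw2
        rw [hexc' w, if_neg hw2, if_neg hw1]
        ring)
      (by
        rw [hexc' u, if_pos rfl, if_neg hur]
        push_cast
        ring)
    have : n + 1 ≤ n := D.le_lam hru ⟨Q', hQ'len, hQ'path, hQ'disj⟩
    omega
  -- every crossing edge is used by Q
  have hc1 : ∀ e, e ∈ D.crossSet F W → e ∈ UQ := by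
    intro e ⟨heF, het, heh⟩
    by_contra hne
    exact heh (Relation.ReflTransGen.tail het (Or.inl ⟨e, heF, hne, rfl, rfl⟩))
  -- Q-edges never enter W from outside
  have hc2 : ∀ e, e ∈ UQ → D.head e ∈ W → D.tail e ∈ W := by
    intro e heS heh
    exact Relation.ReflTransGen.tail heh (Or.inr ⟨e, heS, rfl, rfl⟩)
  -- no walk inside UQ from outside W back into W
  have hnoret : ∀ (a b : V) (es : List E), D.IsWalk a b es → (∀ e ∈ es, e ∈ UQ) →
      a ∉ W → b ∈ W → False := by
    intro a b es hwk hsub ha hb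
    obtain ⟨e, he, het, heh⟩ := D.walk_cross' hwk ha hb
    exact het (hc2 e (hsub e he) heh)
  -- helper: two crossing edges in order on one path is impossible
  have hhelp : ∀ (q l₁ l₂ : List E) (eA eB : E), q = l₁ ++ eA :: l₂ → q ∈ Q → eB ∈ l₂ →
      eA ∈ D.crossSet F W → eB ∈ D.crossSet F W → False := by
    intro q l₁ l₂ eA eB hq hqQ heB heAc heBc
    have hqUQ : ∀ e ∈ q, e ∈ UQ := fun e he => mem_flowOf.mpr ⟨q, hqQ, he⟩
    have hwk : D.IsWalk r u q := (hQpath q hqQ).1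
    rw [hq] at hwk
    obtain ⟨b1, _, hb2⟩ := D.walk_split hwk
    obtain ⟨m₁, m₂, rfl⟩ := List.append_of_mem heB
    obtain ⟨b3, hb3, hb4⟩ := D.walk_split (hb2.2 : D.IsWalk (D.head eA) u (m₁ ++ eB :: m₂))
    have htB : D.tail eB = b3 := hb4.1
    refine hnoret (D.head eA) b3 m₁ hb3 ?_ heAc.2.2 (htB ▸ heBc.2.1)
    intro e he
    exact hqUQ e (by rw [hq]; simp [he])
  -- each path contains at most one crossing edge
  have hc4 : ∀ q ∈ Q, ∀ e₁ ∈ q, ∀ e₂ ∈ q, e₁ ∈ D.crossSet F W → e₂ ∈ D.crossSet F W →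
      e₁ = e₂ := by
    intro q hq e₁ he₁ e₂ he₂ hc₁ hc₂
    by_contra hne
    obtain ⟨l₁, l₂, hdec⟩ := List.append_of_mem he₁
    have he₂' : e₂ ∈ l₁ ∨ e₂ ∈ l₂ := by
      rw [hdec] at he₂
      rcases List.mem_append.mp he₂ with h | h
      · exact Or.inl h
      · rcases List.mem_cons.mp h with h | h
        · exact absurd h.symm hne
        · exact Or.inr h
    rcases he₂' with h | h
    · obtain ⟨m₁, m₂, hdec₂⟩ := List.append_of_mem h
      exact hhelp q m₁ (m₂ ++ e₁ :: l₂) e₂ e₁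
        (by rw [hdec, hdec₂]; simp) hq (by simp) hc₂ hc₁
    · exact hhelp q l₁ l₂ e₁ e₂ hdec hq h hc₁ hc₂
  -- count: the cut has at most n edges
  have hcount : D.cutCard F W ≤ Q.length := by
    classical
    set f : E → List E := fun e => if h : ∃ q, q ∈ Q ∧ e ∈ q then h.choose else [] with hf
    have hfspec : ∀ e ∈ D.crossSet F W, f e ∈ Q ∧ e ∈ f e := by
      intro e he
      have : ∃ q, q ∈ Q ∧ e ∈ q := by
        obtain ⟨q, hq, heq⟩ := mem_flowOf.mp (hc1 e he)
        exact ⟨q, hq, heq⟩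
      rw [hf]
      simp only [dif_pos this]
      exact this.choose_spec
    have hinj : Set.InjOn f (D.crossSet F W) := by
      intro e he e' he' hee
      obtain ⟨h1, h2⟩ := hfspec e he
      obtain ⟨h3, h4⟩ := hfspec e' he'
      exact hc4 (f e) h1 e h2 e' (hee ▸ h4) he he'
    have h1 : (D.crossSet F W).ncard = (f '' D.crossSet F W).ncard :=
      (Set.ncard_image_of_injOn hinj).symm
    have h2 : f '' D.crossSet F W ⊆ ↑Q.toFinset := by
      rintro q ⟨e, he, rfl⟩
      simpa using (hfspec e he).1
    have h3 : (f '' D.crossSet F W).ncard ≤ Q.toFinset.card := by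
      have := Set.ncard_le_ncard h2 (Set.toFinite _)
      rwa [Set.ncard_coe_finset] at this
    have h4 : Q.toFinset.card ≤ Q.length := Q.toFinset_card_le
    rw [cutCard]
    omega
  have := hcut W hrW huW
  rw [hQlen] at hcount
  omega

end Digraph'

namespace Digraph'
set_option linter.unusedSectionVars false
set_option maxHeartbeats 1000000

variable {V E : Type} [Fintype V] [Fintype E] (D : Digraph' V E)

theorem cutCard_submod (F : Set E) (Wa Wb : Set V) :
    D.cutCard F (Wa ∪ Wb) + D.cutCard F (Wa ∩ Wb) ≤ D.cutCard F Wa + D.cutCard F Wb := by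
  rw [cutCard, cutCard, cutCard, cutCard]
  set A := D.crossSet F Wa
  set B := D.crossSet F Wb
  set U := D.crossSet F (Wa ∪ Wb) with hU
  set I := D.crossSet F (Wa ∩ Wb) with hI
  have hsub1 : U ∪ I ⊆ A ∪ B := by
    rintro e (⟨heF, het, heh⟩ | ⟨heF, het, heh⟩)
    · rcases het with h | h
      · exact Or.inl ⟨heF, h, fun hc => heh (Or.inl hc)⟩
      · exact Or.inr ⟨heF, h, fun hc => heh (Or.inr hc)⟩
    · by_cases hc : D.head e ∈ Wa
      · exact Or.inr ⟨heF, het.2, fun hc2 => heh ⟨hc, hc2⟩⟩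
      · exact Or.inl ⟨heF, het.1, hc⟩
  have hsub2 : U ∩ I ⊆ A ∩ B := by
    rintro e ⟨⟨heF, _, heh⟩, ⟨_, het, _⟩⟩
    exact ⟨⟨heF, het.1, fun hc => heh (Or.inl hc)⟩, ⟨heF, het.2, fun hc => heh (Or.inr hc)⟩⟩
  have e1 : U.ncard + I.ncard = (U ∪ I).ncard + (U ∩ I).ncard :=
    (Set.ncard_union_add_ncard_inter U I (Set.toFinite _) (Set.toFinite _)).symm
  have e2 : A.ncard + B.ncard = (A ∪ B).ncard + (A ∩ B).ncard :=
    (Set.ncard_union_add_ncard_inter A B (Set.toFinite _) (Set.toFinite _)).symm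
  have e3 : (U ∪ I).ncard ≤ (A ∪ B).ncard := Set.ncard_le_ncard hsub1 (Set.toFinite _)
  have e4 : (U ∩ I).ncard ≤ (A ∩ B).ncard := Set.ncard_le_ncard hsub2 (Set.toFinite _)
  omega

end Digraph'


open Digraph' in
/-- Deleting the in-edges of `v` unused by a maximum family of pairwise
edge-disjoint `r → v` paths does not reduce any local edge-connectivity from `r`. -/
theorem stmt7 {V E : Type} [Fintype V] [Fintype E] (D : Digraph' V E) (r v : V)
    (hr : ∀ e, D.head e ≠ r) (P : List (List E))
    (hP : ∀ p ∈ P, D.IsPathIn Set.univ r v p) (hdisj : Digraph'.EdgeDisjoint P)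
    (hmax : P.length = D.lam Set.univ r v) :
    ∀ u, u ≠ r →
      D.lam Set.univ r u ≤ D.lam {e | D.head e = v → ∃ p ∈ P, e ∈ p} r u := by
  intro u hu
  set F : Set E := {e | D.head e = v → ∃ p ∈ P, e ∈ p} with hF
  by_cases hrv : r = v
  · have hFuniv : F = Set.univ := by
      ext e
      simp only [hF, Set.mem_setOf_eq, Set.mem_univ, iff_true]
      intro he
      exact absurd (hrv ▸ he) (hr e)
    rw [hFuniv]
  · have hrv' : r ≠ v := hrv
    have hPF : ∀ p ∈ P, D.IsPathIn F r v p := by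
      intro p hp
      obtain ⟨h1, _, h3⟩ := hP p hp
      exact ⟨h1, fun e he _ => ⟨p, hp, he⟩, h3⟩
    -- a tight cut X for (r, v)
    have hex : ∃ X : Set V, r ∈ X ∧ v ∉ X ∧ D.cutCard Set.univ X ≤ P.length := by
      by_contra h
      push_neg at h
      have hcut : ∀ X : Set V, r ∈ X → v ∉ X → P.length + 1 ≤ D.cutCard Set.univ X := by
        intro X h1 h2
        exact h X h1 h2
      have := D.menger (show v ≠ r from fun hc => hrv hc.symm) (P.length + 1) hcut
      omega
    obtain ⟨X, hrX, hvX, hXle⟩ := hex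
    have hXge : P.length ≤ D.cutCard Set.univ X :=
      D.length_le_cutCard P Set.univ X r v hP hdisj hrX hvX
    have hsat : ∀ e, e ∈ D.crossSet Set.univ X → ∃ p ∈ P, e ∈ p :=
      D.crossing_mem_paths P Set.univ X r v hP hdisj hrX hvX hXle
    have hdel : ∀ e, e ∉ F → D.tail e ∉ X := by
      intro e heF htl
      simp only [hF, Set.mem_setOf_eq] at heF
      push_neg at heF
      obtain ⟨hhead, hnp⟩ := heF
      obtain ⟨p, hp, hep⟩ := hsat e ⟨Set.mem_univ e, htl, hhead ▸ hvX⟩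
      exact hnp p hp hep
    obtain ⟨Q, hQlen, hQp, hQd⟩ := D.lam_mem_famSet Set.univ r u hu.symm
    refine D.menger hu (D.lam Set.univ r u) ?_
    intro W hrW huW
    rw [← hQlen]
    by_cases hvW : v ∈ W
    · have hset : D.crossSet F W = D.crossSet Set.univ W := by
        ext e
        constructor
        · rintro ⟨_, het, heh⟩
          exact ⟨Set.mem_univ e, het, heh⟩
        · rintro ⟨_, het, heh⟩
          refine ⟨?_, het, heh⟩
          simp only [hF, Set.mem_setOf_eq]
          intro hc
          exact absurd (hc ▸ hvW) heh
      have h1 := D.length_le_cutCard Q Set.univ W r u hQp hQd hrW huW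
      rw [cutCard, hset]
      exact h1
    · have h1 : P.length ≤ D.cutCard F (W ∪ X) :=
        D.length_le_cutCard P F (W ∪ X) r v hPF hdisj (Or.inl hrW)
          (fun hc => hc.elim hvW hvX)
      have h2 : D.cutCard F (W ∩ X) = D.cutCard Set.univ (W ∩ X) := by
        rw [cutCard, cutCard]
        congr 1
        ext e
        constructor
        · rintro ⟨_, het, heh⟩
          exact ⟨Set.mem_univ e, het, heh⟩
        · rintro ⟨_, het, heh⟩
          refine ⟨?_, het, heh⟩
          by_contra heF
          exact hdel e heF het.2
      have h3 : Q.length ≤ D.cutCard Set.univ (W ∩ X) :=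
        D.length_le_cutCard Q Set.univ (W ∩ X) r u hQp hQd ⟨hrW, hrX⟩
          (fun hc => huW hc.1)
      have h4 : D.cutCard F X = D.cutCard Set.univ X := by
        rw [cutCard, cutCard]
        congr 1
        ext e
        constructor
        · rintro ⟨_, het, heh⟩
          exact ⟨Set.mem_univ e, het, heh⟩
        · rintro ⟨_, het, heh⟩
          refine ⟨?_, het, heh⟩
          by_contra heF
          exact hdel e heF het
      have hsub := D.cutCard_submod F W X
      omega
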